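/- There is an absolute constant c₀ > 0 such that for every prime power q and every nonzero polynomial f ∈ F_q[T] of degree s ≥ 2, the number of monic divisors of f in F_q[T] is at most q^{c₀ s / log s}. -/

import Mathlib

open Polynomial UniqueFactorizationMonoid Multiset in
theorem sum_deg {F : Type} [Field F] [DecidableEq F] (g : Polynomial F) (hg : g ≠ 0) :
    ((normalizedFactors g).map Polynomial.natDegree).sum = g.natDegree := by
  obtain ⟨u, hu⟩ := UniqueFactorizationMonoid.prod_normalizedFactors hg
  have hu0 : (u : Polynomial F) ≠ 0 := Units.ne_zero u
  have hp0 : (normalizedFactors g).prod ≠ 0 := by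
    intro h0; rw [h0, zero_mul] at hu; exact hg hu.symm
  have h2 := Polynomial.natDegree_multiset_prod (t := normalizedFactors g)
    (fun h0 => UniqueFactorizationMonoid.zero_notMem_normalizedFactors g h0)
  have h3 : g.natDegree = ((normalizedFactors g).prod).natDegree := by
    conv_lhs => rw [← hu]
    rw [Polynomial.natDegree_mul hp0 hu0,
      Polynomial.natDegree_eq_zero_of_isUnit u.isUnit, add_zero]
  rw [← h2, h3]

open Polynomial UniqueFactorizationMonoid Multiset in
theorem key_count {F : Type} [Field F] [Fintype F] [DecidableEq F] (f : Polynomial F)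
    (hf : f ≠ 0) (D : ℕ) (hD : 1 ≤ D) :
    ∃ K c : ℕ, K ≤ D * (Fintype.card F)^(D-1) ∧ D * c ≤ f.natDegree ∧
      Nat.card {g : Polynomial F // g.Monic ∧ g ∣ f} ≤ (f.natDegree+1)^K * 2^c := by
  classical
  set s := f.natDegree with hs
  -- elements of normalizedFactors are monic of positive degree
  have fact_mon : ∀ (g : Polynomial F), ∀ p ∈ normalizedFactors g, p.Monic ∧ 0 < p.natDegree := by
    intro g p hp
    have hirr := irreducible_of_normalized_factor p hp
    have hpM : p.Monic := by
      have h1 := normalize_normalized_factor p hp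
      have h2 := Polynomial.monic_normalize (p := p) hirr.ne_zero
      rwa [h1] at h2
    exact ⟨hpM, hirr.natDegree_pos⟩
  have card_nf_le : ∀ (g : Polynomial F), g ≠ 0 → Multiset.card (normalizedFactors g) ≤ g.natDegree := by
    intro g hg
    have h1 : Multiset.card (normalizedFactors g) • 1 ≤ ((normalizedFactors g).map Polynomial.natDegree).sum := by
      rw [← Multiset.card_map Polynomial.natDegree]
      refine Multiset.card_nsmul_le_sum ?_
      intro x hx
      obtain ⟨p, hp, rfl⟩ := Multiset.mem_map.1 hx
      exact (fact_mon g p hp).2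
    rw [smul_eq_mul, mul_one, sum_deg g hg] at h1
    exact h1
  -- the sets
  set S := {p : Polynomial F // p.Monic ∧ 0 < p.natDegree ∧ p.natDegree < D} with hS
  set M := Multiset.filter (fun p => D ≤ p.natDegree) (normalizedFactors f) with hM
  -- S is finite with card at most D * q^(D-1)
  have ψinj : Function.Injective (fun p : S =>
      ((fun i : Fin (D-1) => (p : Polynomial F).coeff i, (⟨(p : Polynomial F).natDegree, p.2.2.2⟩ : Fin D)) :
        (Fin (D-1) → F) × Fin D)) := by
    rintro ⟨p, hpm, hp1, hp2⟩ ⟨r, hrm, hr1, hr2⟩ h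
    simp only [Prod.mk.injEq, Fin.mk.injEq] at h
    obtain ⟨hco, hdeg⟩ := h
    ext1
    dsimp only
    ext i
    rcases lt_trichotomy i p.natDegree with hi | hi | hi
    · have hiD : i < D - 1 := by omega
      have := congrFun hco ⟨i, hiD⟩
      simpa using this
    · subst hi
      rw [hpm.coeff_natDegree, hdeg]
      exact hrm.coeff_natDegree.symm
    · rw [Polynomial.coeff_eq_zero_of_natDegree_lt hi,
        Polynomial.coeff_eq_zero_of_natDegree_lt (hdeg ▸ hi)]
  haveI : Finite S := Finite.of_injective _ ψinj
  haveI : Fintype S := Fintype.ofFinite S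
  have hK : Nat.card S ≤ D * (Fintype.card F)^(D-1) := by
    have := Nat.card_le_card_of_injective _ ψinj
    rwa [Nat.card_prod, Nat.card_fun, Nat.card_eq_fintype_card (α := Fin (D-1)),
      Nat.card_eq_fintype_card (α := Fin D), Nat.card_eq_fintype_card (α := F),
      Fintype.card_fin, Fintype.card_fin, mul_comm] at this
  -- M has c·D ≤ s
  have hMle : M ≤ normalizedFactors f := Multiset.filter_le _ _
  have hc : D * Multiset.card M ≤ s := by
    have h1 : Multiset.card M • D ≤ (M.map Polynomial.natDegree).sum := by
      rw [← Multiset.card_map Polynomial.natDegree]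
      refine Multiset.card_nsmul_le_sum ?_
      intro x hx
      obtain ⟨p, hp, rfl⟩ := Multiset.mem_map.1 hx
      exact (Multiset.mem_filter.1 hp).2
    have h2 : (M.map Polynomial.natDegree).sum ≤ ((normalizedFactors f).map Polynomial.natDegree).sum := by
      obtain ⟨u, hu⟩ := Multiset.le_iff_exists_add.1 (Multiset.map_le_map (f := Polynomial.natDegree) hMle)
      rw [hu, Multiset.sum_add]; omega
    rw [smul_eq_mul, mul_comm] at h1
    have h3 := sum_deg f hf
    omega
  refine ⟨Nat.card S, Multiset.card M, hK, hc, ?_⟩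
  -- main injection
  have main : Nat.card {g : Polynomial F // g.Monic ∧ g ∣ f} ≤
      Nat.card ((S → Fin (s+1)) × {t : Multiset (Polynomial F) // t ∈ M.powerset.toFinset}) := by
    have hcount : ∀ (g : Polynomial F), g.Monic → g ∣ f → ∀ p : Polynomial F,
        Multiset.count p (normalizedFactors g) < s + 1 := by
      intro g hgm hgd p
      have hg0 : g ≠ 0 := hgm.ne_zero
      have := Multiset.count_le_card p (normalizedFactors g)
      have h2 := card_nf_le g hg0
      have h3 := Polynomial.natDegree_le_of_dvd hgd hf
      omega
    have hnfle : ∀ (g : Polynomial F), g.Monic → g ∣ f →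
        normalizedFactors g ≤ normalizedFactors f := by
      intro g hgm hgd
      exact (dvd_iff_normalizedFactors_le_normalizedFactors hgm.ne_zero hf).1 hgd
    refine Nat.card_le_card_of_injective (fun g =>
      ((fun p : S => (⟨Multiset.count (p : Polynomial F) (normalizedFactors (g : Polynomial F)),
          hcount g g.2.1 g.2.2 p⟩ : Fin (s+1))),
       ⟨Multiset.filter (fun p => D ≤ p.natDegree) (normalizedFactors (g : Polynomial F)), by
          rw [Multiset.mem_toFinset, Multiset.mem_powerset, hM]
          exact Multiset.filter_le_filter _ (hnfle g g.2.1 g.2.2)⟩)) ?_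
    rintro ⟨g1, hm1, hd1⟩ ⟨g2, hm2, hd2⟩ h
    simp only [Prod.mk.injEq, Subtype.mk.injEq] at h
    obtain ⟨hlow, hhigh⟩ := h
    have hnf : normalizedFactors g1 = normalizedFactors g2 := by
      ext p
      by_cases hp : p ∈ normalizedFactors g1 ∨ p ∈ normalizedFactors g2
      · have hmon : p.Monic ∧ 0 < p.natDegree := by
          rcases hp with hp | hp
          exacts [fact_mon g1 p hp, fact_mon g2 p hp]
        by_cases hdeg : D ≤ p.natDegree
        · have h1 := congrArg (Multiset.count p) hhigh
          have e1 : Multiset.count p (Multiset.filter (fun r => D ≤ r.natDegree) (normalizedFactors g1))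
              = Multiset.count p (normalizedFactors g1) := Multiset.count_filter_of_pos hdeg
          have e2 : Multiset.count p (Multiset.filter (fun r => D ≤ r.natDegree) (normalizedFactors g2))
              = Multiset.count p (normalizedFactors g2) := Multiset.count_filter_of_pos hdeg
          rw [← e1, ← e2]
          exact h1
        · push_neg at hdeg
          have hpS : p.Monic ∧ 0 < p.natDegree ∧ p.natDegree < D := ⟨hmon.1, hmon.2, hdeg⟩
          have := congrFun hlow ⟨p, hpS⟩
          simpa [Fin.mk.injEq] using this
      · push_neg at hp
        rw [Multiset.count_eq_zero_of_notMem hp.1, Multiset.count_eq_zero_of_notMem hp.2]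
    have hg10 : g1 ≠ 0 := hm1.ne_zero
    have hg20 : g2 ≠ 0 := hm2.ne_zero
    have hass : Associated g1 g2 :=
      (UniqueFactorizationMonoid.prod_normalizedFactors hg10).symm.trans
        (hnf ▸ UniqueFactorizationMonoid.prod_normalizedFactors hg20)
    exact Subtype.ext (Polynomial.eq_of_monic_of_associated hm1 hm2 hass)
  -- compute cardinalities
  have h1 : Nat.card ((S → Fin (s+1)) × {t : Multiset (Polynomial F) // t ∈ M.powerset.toFinset})
      = (s+1) ^ Nat.card S * (M.powerset.toFinset).card := by
    rw [Nat.card_prod, Nat.card_fun, Nat.card_eq_fintype_card (α := Fin (s+1)), Fintype.card_fin]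
    congr 1
    rw [Nat.card_eq_fintype_card]
    exact Fintype.card_coe _
  have h2 : (M.powerset.toFinset).card ≤ 2 ^ Multiset.card M := by
    have := Multiset.toFinset_card_le M.powerset
    rwa [Multiset.card_powerset] at this
  calc Nat.card {g : Polynomial F // g.Monic ∧ g ∣ f} ≤ _ := main
    _ = (s+1) ^ Nat.card S * (M.powerset.toFinset).card := h1
    _ ≤ (s+1) ^ Nat.card S * 2 ^ Multiset.card M := by
        exact Nat.mul_le_mul_left _ h2


set_option maxHeartbeats 1000000 in
theorem real_bound (q s D K c : ℕ) (hq : 2 ≤ q) (hs : 2 ≤ s) (hD1 : 1 ≤ D)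
    (hxD : Real.log s / (2 * Real.log q) ≤ (D:ℝ))
    (hDx : (D:ℝ) ≤ Real.log s / (2 * Real.log q) + 1)
    (hK : K ≤ D * q^(D-1))
    (hc : D * c ≤ s) :
    ((s:ℝ)+1)^K * 2^c ≤ (q:ℝ) ^ ((10000:ℝ) * s / Real.log s) := by
  have hq1 : (1:ℝ) < q := by exact_mod_cast hq
  have hs1 : (1:ℝ) < s := by exact_mod_cast Nat.lt_of_lt_of_le one_lt_two hs
  have hs2 : (2:ℝ) ≤ s := by exact_mod_cast hs
  set lq := Real.log q with hlq
  set ls := Real.log s with hls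
  have hl2 : (0.6931471803:ℝ) < Real.log 2 := Real.log_two_gt_d9
  have hl2' : Real.log 2 < 0.6931471808 := Real.log_two_lt_d9
  have f1 : Real.log 2 ≤ lq := Real.log_le_log two_pos (by exact_mod_cast hq)
  have f2 : Real.log 2 ≤ ls := Real.log_le_log two_pos hs2
  have hlq0 : 0 < lq := by linarith
  have hls0 : 0 < ls := by linarith
  have hD0 : (0:ℝ) < D := by exact_mod_cast hD1
  set t := (s:ℝ) ^ ((1:ℝ)/8) with ht
  have ht1 : (1:ℝ) ≤ t := Real.one_le_rpow (le_of_lt hs1) (by norm_num)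
  have ht0 : (0:ℝ) < t := by linarith
  have ht8 : t ^ (8:ℕ) = (s:ℝ) := by
    rw [ht, ← Real.rpow_natCast ((s:ℝ) ^ ((1:ℝ)/8)) 8, ← Real.rpow_mul (by positivity)]
    norm_num
  have f6 : ls ≤ 8 * t := by
    have h1 : Real.log t = (1/8) * ls := Real.log_rpow (by positivity) _
    have h2 : Real.log t ≤ t - 1 := Real.log_le_sub_one_of_pos ht0
    linarith
  have ht4 : t ^ (4:ℕ) = (s:ℝ) ^ ((1:ℝ)/2) := by
    rw [ht, ← Real.rpow_natCast ((s:ℝ) ^ ((1:ℝ)/8)) 4, ← Real.rpow_mul (by positivity)]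
    norm_num
  clear_value t
  -- bound on c-part
  have hcr : (c:ℝ) * (D:ℝ) ≤ (s:ℝ) := by
    have : ((D*c : ℕ):ℝ) ≤ (s:ℝ) := by exact_mod_cast hc
    push_cast at this; linarith [this]
  have hlsD : ls ≤ 2 * lq * D := by
    rw [div_le_iff₀ (by positivity)] at hxD
    linarith
  have partC : (c:ℝ) * Real.log 2 ≤ 2 * (s * lq) / ls := by
    rw [le_div_iff₀ hls0]
    have hcnn : (0:ℝ) ≤ c := Nat.cast_nonneg c
    have h3 : (c:ℝ) * ls ≤ (c:ℝ) * (2 * lq * D) := by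
      apply mul_le_mul_of_nonneg_left hlsD hcnn
    have h4 : (c:ℝ) * (2 * lq * D) = 2 * lq * ((c:ℝ) * D) := by ring
    have h5 : 2 * lq * ((c:ℝ) * D) ≤ 2 * lq * s := by
      apply mul_le_mul_of_nonneg_left hcr (by positivity)
    nlinarith [mul_le_mul_of_nonneg_left (show Real.log 2 ≤ 1 by linarith) (mul_nonneg hcnn hls0.le)]
  -- bound on K-part
  have hE : (q:ℝ) ^ ((D:ℝ) - 1) ≤ t ^ (4:ℕ) := by
    have e1 : (q:ℝ) ^ ((D:ℝ) - 1) = Real.exp (lq * ((D:ℝ)-1)) := Real.rpow_def_of_pos (by positivity) _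
    have e2 := ht4
    have e3 : (s:ℝ) ^ ((1:ℝ)/2) = Real.exp (ls * (1/2)) := Real.rpow_def_of_pos (by positivity) _
    rw [e1, e2, e3, Real.exp_le_exp]
    have h1 : (D:ℝ) - 1 ≤ ls / (2 * lq) := by linarith
    have := mul_le_mul_of_nonneg_left h1 hlq0.le
    have h2 : lq * (ls / (2*lq)) = ls * (1/2) := by field_simp
    linarith
  have hKr : (K:ℝ) ≤ (D:ℝ) * t ^ (4:ℕ) := by
    have h1 : (K:ℝ) ≤ (D:ℝ) * ((q:ℝ) ^ ((D-1:ℕ):ℕ)) := by exact_mod_cast hK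
    have h2 : ((q:ℝ) ^ ((D-1:ℕ):ℕ)) = (q:ℝ) ^ ((D:ℝ) - 1) := by
      rw [← Real.rpow_natCast (q:ℝ) (D-1), Nat.cast_sub hD1, Nat.cast_one]
    rw [h2] at h1
    calc (K:ℝ) ≤ (D:ℝ) * ((q:ℝ) ^ ((D:ℝ)-1)) := h1
      _ ≤ (D:ℝ) * t ^ (4:ℕ) := by apply mul_le_mul_of_nonneg_left hE hD0.le
  have hDle : (D:ℝ) ≤ 3 * ls := by
    have h1 : ls / (2 * lq) ≤ ls / (2 * Real.log 2) := by
      apply div_le_div_of_nonneg_left hls0.le (by linarith) (by linarith)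
    have h2 : ls / (2 * Real.log 2) ≤ ls := div_le_self hls0.le (by linarith)
    linarith
  have hlog1 : Real.log ((s:ℝ)+1) ≤ 2 * ls := by
    have h1 : (s:ℝ) + 1 ≤ (s:ℝ) * (s:ℝ) := by nlinarith
    have h2 := Real.log_le_log (by positivity) h1
    rw [Real.log_mul (by positivity) (by positivity)] at h2
    linarith
  have hlognn : 0 ≤ Real.log ((s:ℝ)+1) := Real.log_nonneg (by linarith)
  have partK : (K:ℝ) * Real.log ((s:ℝ)+1) ≤ 9998 * (s * lq) / ls := by
    rw [le_div_iff₀ hls0]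
    have h1 : (K:ℝ) * Real.log ((s:ℝ)+1) ≤ ((D:ℝ) * t^(4:ℕ)) * (2 * ls) := by
      apply mul_le_mul hKr hlog1 hlognn (by positivity)
    have h2 : (K:ℝ) * Real.log ((s:ℝ)+1) * ls ≤ ((D:ℝ) * t^(4:ℕ)) * (2 * ls) * ls := by
      apply mul_le_mul_of_nonneg_right h1 hls0.le
    have htnn : (0:ℝ) ≤ t^(4:ℕ) := by positivity
    have h3 : ((D:ℝ) * t^(4:ℕ)) * (2 * ls) * ls ≤ ((3*ls) * t^(4:ℕ)) * (2 * ls) * ls := by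
      have e1 := mul_le_mul_of_nonneg_right hDle htnn
      have e2 := mul_le_mul_of_nonneg_right (mul_le_mul_of_nonneg_right e1
        (by positivity : (0:ℝ) ≤ 2*ls)) hls0.le
      exact e2
    have h4 : ((3*ls) * t^(4:ℕ)) * (2 * ls) * ls = 6 * (ls^3 * t^(4:ℕ)) := by ring
    have h6 : ls^3 ≤ (8*t)^3 := pow_le_pow_left₀ hls0.le f6 3
    have h5 : 6 * (ls^3 * t^(4:ℕ)) ≤ 6 * ((8*t)^3 * t^(4:ℕ)) := by
      have e3 := mul_le_mul_of_nonneg_right h6 htnn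
      linarith
    have h7 : 6 * ((8*t)^3 * t^(4:ℕ)) = 3072 * t^7 := by ring
    have h8 : (3072:ℝ) * t^7 ≤ 9998 * (s * lq) := by
      have h9 : t^7 ≤ t^8 := pow_le_pow_right₀ ht1 (by norm_num)
      have h10 : (0:ℝ) ≤ (s:ℝ) := by positivity
      have h11 : (3072:ℝ) * t^8 = 3072 * s := by rw [ht8]
      have h12 : (0.6931471803:ℝ) * s ≤ Real.log 2 * s := mul_le_mul_of_nonneg_right hl2.le h10
      have h13 : Real.log 2 * s ≤ lq * s := mul_le_mul_of_nonneg_right f1 h10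
      nlinarith
    linarith
  -- combine
  have hLHS : (0:ℝ) < ((s:ℝ)+1)^K * 2^c := by positivity
  rw [Real.rpow_def_of_pos (by positivity), ← Real.log_le_iff_le_exp hLHS,
    Real.log_mul (by positivity) (by positivity), Real.log_pow, Real.log_pow]
  have final : (K:ℝ) * Real.log ((s:ℝ)+1) + (c:ℝ) * Real.log 2 ≤ 10000 * (s * lq) / ls := by
    have : 2 * (s * lq) / ls + 9998 * (s * lq) / ls = 10000 * (s * lq) / ls := by ring
    linarith
  calc (K:ℕ) * Real.log ((s:ℝ)+1) + (c:ℕ) * Real.log 2 ≤ 10000 * (s * lq) / ls := final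
    _ = lq * (10000 * s / ls) := by ring


/-- There is an absolute constant `c₀ > 0` such that for every finite
field `F` (with `q = #F` elements, a prime power) and every nonzero polynomial
`f ∈ F[T]` of degree `s ≥ 2`, the number of monic divisors of `f` in `F[T]` is at most
`q^(c₀ s / log s)`, where `log` is the natural logarithm. -/
theorem count_monic_divisors_le :
    ∃ c₀ : ℝ, 0 < c₀ ∧
      ∀ (F : Type) [Field F] [Fintype F] (f : Polynomial F),
        f ≠ 0 → 2 ≤ f.natDegree →
        (Nat.card {g : Polynomial F // g.Monic ∧ g ∣ f} : ℝ) ≤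
          (Fintype.card F : ℝ) ^
            (c₀ * (f.natDegree : ℝ) / Real.log (f.natDegree : ℝ)) := by
  refine ⟨10000, by norm_num, ?_⟩
  intro F _ _ f hf hdeg
  classical
  set q := Fintype.card F with hqdef
  set s := f.natDegree with hsdef
  have hq : 2 ≤ q := Fintype.one_lt_card
  have hq1 : (1:ℝ) < q := by exact_mod_cast hq
  have hs1 : (1:ℝ) < s := by exact_mod_cast Nat.lt_of_lt_of_le one_lt_two hdeg
  set x := Real.log s / (2 * Real.log q) with hx
  have hx0 : 0 ≤ x := by
    apply div_nonneg (Real.log_nonneg (by linarith))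
    have := Real.log_nonneg hq1.le
    linarith
  set D := max (Nat.ceil x) 1 with hD
  have hD1 : 1 ≤ D := le_max_right _ _
  have hxD : x ≤ (D:ℝ) := by
    refine le_trans (Nat.le_ceil x) ?_
    exact_mod_cast Nat.cast_le.mpr (le_max_left _ 1)
  have hDx : (D:ℝ) ≤ x + 1 := by
    by_cases h : Nat.ceil x = 0
    · have : D = 1 := by rw [hD, h]; rfl
      rw [this]; push_cast; linarith
    · have h1 : 1 ≤ Nat.ceil x := Nat.one_le_iff_ne_zero.mpr h
      have h2 : D = Nat.ceil x := max_eq_left h1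
      rw [h2]
      exact le_of_lt (Nat.ceil_lt_add_one hx0)
  obtain ⟨K, c, hK, hc, hcard⟩ := key_count f hf D hD1
  have hreal := real_bound q s D K c hq hdeg hD1 hxD hDx hK hc
  have hcast : ((f.natDegree + 1) ^ K * 2 ^ c : ℕ) = (((s:ℝ)+1)^K * 2^c : ℝ) := by
    push_cast; rfl
  calc (Nat.card {g : Polynomial F // g.Monic ∧ g ∣ f} : ℝ)
      ≤ (((f.natDegree + 1) ^ K * 2 ^ c : ℕ) : ℝ) := by exact_mod_cast hcard
    _ = ((s:ℝ)+1)^K * 2^c := hcast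
    _ ≤ (q:ℝ) ^ ((10000:ℝ) * s / Real.log s) := hreal
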